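/- Let A be a real tensor of size n×n×n₃, invertible with inverse A⁻¹, and let E be a tensor of size n×n×n₃ with ‖A⁻¹‖₂·‖E‖₂ < 1. Then B = A+E (entrywise sum) is invertible, and any tensor B⁻¹ with B*B⁻¹ = B⁻¹*B = 𝓘 satisfies ‖B⁻¹‖_F ≤ ‖A⁻¹‖_F/γ and ‖B⁻¹‖₂ ≤ ‖A⁻¹‖₂/γ, where γ = 1 − ‖A⁻¹‖₂·‖E‖₂. -/

import Mathlib

open scoped Matrix.Norms.L2Operator

noncomputable section

/-- The t-product of third-order tensors. -/
def tProd {n₁ n₂ n₃ n₄ : ℕ} [NeZero n₃] (A : Fin n₁ → Fin n₂ → ZMod n₃ → ℝ)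
    (B : Fin n₂ → Fin n₄ → ZMod n₃ → ℝ) : Fin n₁ → Fin n₄ → ZMod n₃ → ℝ :=
  fun i j k => ∑ l : Fin n₂, ∑ m : ZMod n₃, A i l (k - m) * B l j m

/-- The Frobenius norm of a third-order tensor. -/
def frobNorm {n₁ n₂ n₃ : ℕ} [NeZero n₃] (A : Fin n₁ → Fin n₂ → ZMod n₃ → ℝ) : ℝ :=
  Real.sqrt (∑ i : Fin n₁, ∑ j : Fin n₂, ∑ k : ZMod n₃, (A i j k) ^ 2)

/-- The block circulant matrix of a third-order tensor. -/
def bcirc {n₁ n₂ n₃ : ℕ} (A : Fin n₁ → Fin n₂ → ZMod n₃ → ℝ) :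
    Matrix (Fin n₁ × ZMod n₃) (Fin n₂ × ZMod n₃) ℝ :=
  fun p q => A p.1 q.1 (p.2 - q.2)

/-- The spectral norm of a third-order tensor: the L2 operator norm of its
block circulant matrix. -/
def specNorm {n₁ n₂ n₃ : ℕ} [NeZero n₃] (A : Fin n₁ → Fin n₂ → ZMod n₃ → ℝ) : ℝ :=
  ‖bcirc A‖

/-- The identity tensor. -/
def tId (n n₃ : ℕ) : Fin n → Fin n → ZMod n₃ → ℝ :=
  fun i j k => if i = j ∧ k = 0 then 1 else 0

/-- The tensor transpose. -/
def tTrans {n₁ n₂ n₃ : ℕ} (A : Fin n₁ → Fin n₂ → ZMod n₃ → ℝ) :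
    Fin n₂ → Fin n₁ → ZMod n₃ → ℝ :=
  fun i j k => A j i (-k)

/-- `X` is a Moore-Penrose inverse of `A`. -/
def IsMPInv {n₁ n₂ n₃ : ℕ} [NeZero n₃] (A : Fin n₁ → Fin n₂ → ZMod n₃ → ℝ)
    (X : Fin n₂ → Fin n₁ → ZMod n₃ → ℝ) : Prop :=
  tProd (tProd A X) A = A ∧ tProd (tProd X A) X = X ∧
    tTrans (tProd A X) = tProd A X ∧ tTrans (tProd X A) = tProd X A

/-- The `i`-th DFT block of a third-order tensor. -/
def dftBlock {n₁ n₂ n₃ : ℕ} [NeZero n₃] (A : Fin n₁ → Fin n₂ → ZMod n₃ → ℝ) (i : ZMod n₃) :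
    Matrix (Fin n₁) (Fin n₂) ℂ :=
  fun p q => ∑ k : ZMod n₃,
    Complex.exp (-2 * Real.pi * Complex.I * (i.val : ℂ) * (k.val : ℂ) / (n₃ : ℂ)) * (A p q k : ℂ)

end


set_option linter.unusedSectionVars false
section Helpers
variable {n₃ : ℕ} [NeZero n₃]

lemma bcirc_tProd {n₁ n₂ n₄ : ℕ} (A : Fin n₁ → Fin n₂ → ZMod n₃ → ℝ)
    (B : Fin n₂ → Fin n₄ → ZMod n₃ → ℝ) :
    bcirc (tProd A B) = bcirc A * bcirc B := by
  ext ⟨i, k⟩ ⟨j, m'⟩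
  simp only [bcirc, tProd, Matrix.mul_apply, Fintype.sum_prod_type]
  refine Finset.sum_congr rfl fun l _ => ?_
  refine Fintype.sum_equiv (Equiv.addRight m') _ _ fun m => ?_
  simp only [Equiv.coe_addRight, add_sub_cancel_right]
  congr 1
  congr 1
  ring

lemma bcirc_tId (n : ℕ) : bcirc (tId n n₃) = 1 := by
  ext ⟨i, k⟩ ⟨j, m⟩
  simp only [bcirc, tId, Matrix.one_apply, Prod.mk.injEq, sub_eq_zero]

lemma bcirc_injective {n₁ n₂ : ℕ} : Function.Injective
    (bcirc : (Fin n₁ → Fin n₂ → ZMod n₃ → ℝ) → Matrix (Fin n₁ × ZMod n₃) (Fin n₂ × ZMod n₃) ℝ) := by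
  intro X Y h
  funext i j k
  have := congrFun (congrFun h (i, k)) (j, 0)
  simpa [bcirc] using this

lemma bcirc_add {n₁ n₂ : ℕ} (X Y : Fin n₁ → Fin n₂ → ZMod n₃ → ℝ) :
    bcirc (X + Y) = bcirc X + bcirc Y := rfl

lemma bcirc_smul {n₁ n₂ : ℕ} (c : ℝ) (X : Fin n₁ → Fin n₂ → ZMod n₃ → ℝ) :
    bcirc (c • X) = c • bcirc X := rfl

end Helpers
set_option linter.unusedSectionVars false
section Helpers2
variable {n₃ : ℕ} [NeZero n₃] {n : ℕ}

lemma tProd_assoc (A B C : Fin n → Fin n → ZMod n₃ → ℝ) :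
    tProd (tProd A B) C = tProd A (tProd B C) :=
  bcirc_injective (by rw [bcirc_tProd, bcirc_tProd, bcirc_tProd, bcirc_tProd, Matrix.mul_assoc])

lemma tProd_tId (A : Fin n → Fin n → ZMod n₃ → ℝ) : tProd A (tId n n₃) = A :=
  bcirc_injective (by rw [bcirc_tProd, bcirc_tId, mul_one])

lemma tId_tProd (A : Fin n → Fin n → ZMod n₃ → ℝ) : tProd (tId n n₃) A = A :=
  bcirc_injective (by rw [bcirc_tProd, bcirc_tId, one_mul])

lemma tProd_add_left (X Y Z : Fin n → Fin n → ZMod n₃ → ℝ) :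
    tProd (X + Y) Z = tProd X Z + tProd Y Z :=
  bcirc_injective (by rw [bcirc_tProd, bcirc_add, bcirc_add, add_mul, bcirc_tProd, bcirc_tProd])

lemma tProd_add_right (X Y Z : Fin n → Fin n → ZMod n₃ → ℝ) :
    tProd X (Y + Z) = tProd X Y + tProd X Z :=
  bcirc_injective (by rw [bcirc_tProd, bcirc_add, bcirc_add, mul_add, bcirc_tProd, bcirc_tProd])

lemma tProd_smul (c : ℝ) (X Y : Fin n → Fin n → ZMod n₃ → ℝ) :
    tProd X (c • Y) = c • tProd X Y :=
  bcirc_injective (by rw [bcirc_tProd, bcirc_smul, bcirc_smul, bcirc_tProd, Matrix.mul_smul])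

lemma tProd_smul_left (c : ℝ) (X Y : Fin n → Fin n → ZMod n₃ → ℝ) :
    tProd (c • X) Y = c • tProd X Y :=
  bcirc_injective (by rw [bcirc_tProd, bcirc_smul, bcirc_smul, bcirc_tProd, Matrix.smul_mul])

/-- Left multiplication by a tensor as a linear map. -/
def tLmul (B : Fin n → Fin n → ZMod n₃ → ℝ) :
    (Fin n → Fin n → ZMod n₃ → ℝ) →ₗ[ℝ] (Fin n → Fin n → ZMod n₃ → ℝ) where
  toFun := tProd B
  map_add' := tProd_add_right B
  map_smul' c X := tProd_smul c B X

/-- Right multiplication by a tensor as a linear map. -/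
def tRmul (B : Fin n → Fin n → ZMod n₃ → ℝ) :
    (Fin n → Fin n → ZMod n₃ → ℝ) →ₗ[ℝ] (Fin n → Fin n → ZMod n₃ → ℝ) where
  toFun X := tProd X B
  map_add' X Y := tProd_add_left X Y B
  map_smul' c X := tProd_smul_left c X B

lemma exists_right_inv {B : Fin n → Fin n → ZMod n₃ → ℝ}
    (hB : IsUnit (bcirc B)) : ∃ C, tProd B C = tId n n₃ := by
  have hinj : Function.Injective (tLmul B) := by
    intro X Y h
    apply bcirc_injective
    have : bcirc B * bcirc X = bcirc B * bcirc Y := by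
      rw [← bcirc_tProd, ← bcirc_tProd]; exact congrArg bcirc h
    obtain ⟨u, hu⟩ := hB
    calc bcirc X = (↑u⁻¹ * u) * bcirc X := by rw [u.inv_mul, one_mul]
    _ = (↑u⁻¹ * u) * bcirc Y := by rw [Matrix.mul_assoc, Matrix.mul_assoc, hu, this]
    _ = bcirc Y := by rw [u.inv_mul, one_mul]
  exact ((LinearMap.injective_iff_surjective).mp hinj) (tId n n₃)

lemma exists_left_inv {B : Fin n → Fin n → ZMod n₃ → ℝ}
    (hB : IsUnit (bcirc B)) : ∃ C, tProd C B = tId n n₃ := by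
  have hinj : Function.Injective (tRmul B) := by
    intro X Y h
    apply bcirc_injective
    have : bcirc X * bcirc B = bcirc Y * bcirc B := by
      rw [← bcirc_tProd, ← bcirc_tProd]; exact congrArg bcirc h
    obtain ⟨u, hu⟩ := hB
    calc bcirc X = bcirc X * (u * ↑u⁻¹) := by rw [u.mul_inv, mul_one]
    _ = bcirc Y * (u * ↑u⁻¹) := by
          rw [← Matrix.mul_assoc, ← Matrix.mul_assoc, hu, this]
    _ = bcirc Y := by rw [u.mul_inv, mul_one]
  exact ((LinearMap.injective_iff_surjective).mp hinj) (tId n n₃)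

end Helpers2
set_option linter.unusedSectionVars false
section Helpers3
variable {n₃ : ℕ} [NeZero n₃]

lemma specNorm_nonneg {n₁ n₂ : ℕ} (A : Fin n₁ → Fin n₂ → ZMod n₃ → ℝ) :
    0 ≤ specNorm A := norm_nonneg _

lemma frobNorm_nonneg {n₁ n₂ : ℕ} (A : Fin n₁ → Fin n₂ → ZMod n₃ → ℝ) :
    0 ≤ frobNorm A := Real.sqrt_nonneg _

lemma specNorm_tProd_le {n₁ n₂ n₄ : ℕ} (X : Fin n₁ → Fin n₂ → ZMod n₃ → ℝ)
    (Y : Fin n₂ → Fin n₄ → ZMod n₃ → ℝ) :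
    specNorm (tProd X Y) ≤ specNorm X * specNorm Y := by
  rw [specNorm, bcirc_tProd]; exact Matrix.l2_opNorm_mul _ _

/-- The `j`-th column of a tensor, as a Euclidean vector. -/
def tcol {n₁ n₂ : ℕ} (A : Fin n₁ → Fin n₂ → ZMod n₃ → ℝ) (j : Fin n₂) :
    EuclideanSpace ℝ (Fin n₁ × ZMod n₃) := WithLp.toLp 2 (fun p => A p.1 j p.2)

lemma norm_tcol_sq {n₁ n₂ : ℕ} (A : Fin n₁ → Fin n₂ → ZMod n₃ → ℝ) (j : Fin n₂) :
    ‖tcol A j‖ ^ 2 = ∑ i, ∑ k, (A i j k) ^ 2 := by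
  rw [EuclideanSpace.norm_eq, Real.sq_sqrt (by positivity)]
  rw [Fintype.sum_prod_type]
  simp [Real.norm_eq_abs, sq_abs, tcol]

lemma frobNorm_eq_sqrt_cols {n₁ n₂ : ℕ} (A : Fin n₁ → Fin n₂ → ZMod n₃ → ℝ) :
    frobNorm A = Real.sqrt (∑ j, ‖tcol A j‖ ^ 2) := by
  rw [frobNorm]
  congr 1
  simp_rw [norm_tcol_sq]
  exact Finset.sum_comm

lemma tcol_tProd {n₁ n₂ n₄ : ℕ} (X : Fin n₁ → Fin n₂ → ZMod n₃ → ℝ)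
    (Y : Fin n₂ → Fin n₄ → ZMod n₃ → ℝ) (j : Fin n₄) :
    tcol (tProd X Y) j = (EuclideanSpace.equiv (Fin n₁ × ZMod n₃) ℝ).symm
      (Matrix.mulVec (bcirc X) (tcol Y j)) := by
  ext p
  obtain ⟨i, k⟩ := p
  simp [tcol, tProd, Matrix.mulVec, dotProduct, bcirc, Fintype.sum_prod_type]

lemma frobNorm_tProd_le {n₁ n₂ n₄ : ℕ} (X : Fin n₁ → Fin n₂ → ZMod n₃ → ℝ)
    (Y : Fin n₂ → Fin n₄ → ZMod n₃ → ℝ) :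
    frobNorm (tProd X Y) ≤ specNorm X * frobNorm Y := by
  rw [frobNorm_eq_sqrt_cols, frobNorm_eq_sqrt_cols]
  have h1 : ∀ j, ‖tcol (tProd X Y) j‖ ≤ ‖bcirc X‖ * ‖tcol Y j‖ := fun j => by
    rw [tcol_tProd]; exact Matrix.l2_opNorm_mulVec _ _
  calc Real.sqrt (∑ j, ‖tcol (tProd X Y) j‖ ^ 2)
      ≤ Real.sqrt (∑ j, (‖bcirc X‖ * ‖tcol Y j‖) ^ 2) := by
        apply Real.sqrt_le_sqrt
        apply Finset.sum_le_sum
        intro j _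
        exact pow_le_pow_left₀ (norm_nonneg _) (h1 j) 2
    _ = specNorm X * Real.sqrt (∑ j, ‖tcol Y j‖ ^ 2) := by
        simp_rw [mul_pow, ← Finset.mul_sum]
        rw [Real.sqrt_mul (sq_nonneg _), Real.sqrt_sq (norm_nonneg _)]
        rfl

/-- A tensor flattened into a Euclidean vector. -/
def fvec {n₁ n₂ : ℕ} (A : Fin n₁ → Fin n₂ → ZMod n₃ → ℝ) :
    EuclideanSpace ℝ (Fin n₁ × Fin n₂ × ZMod n₃) := WithLp.toLp 2 (fun p => A p.1 p.2.1 p.2.2)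

lemma frobNorm_eq_fvec {n₁ n₂ : ℕ} (A : Fin n₁ → Fin n₂ → ZMod n₃ → ℝ) :
    frobNorm A = ‖fvec A‖ := by
  rw [EuclideanSpace.norm_eq, frobNorm]
  congr 1
  simp [Fintype.sum_prod_type, fvec, sq_abs]

end Helpers3
theorem perturbed_inverse_norm_bound (n n₃ : ℕ) [NeZero n₃] (hn : 0 < n)
    (A Ainv E : Fin n → Fin n → ZMod n₃ → ℝ)
    (hA₁ : tProd A Ainv = tId n n₃) (hA₂ : tProd Ainv A = tId n n₃)
    (hE : specNorm Ainv * specNorm E < 1) :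
    (∃ C : Fin n → Fin n → ZMod n₃ → ℝ,
        tProd (A + E) C = tId n n₃ ∧ tProd C (A + E) = tId n n₃) ∧
      ∀ Binv : Fin n → Fin n → ZMod n₃ → ℝ,
        tProd (A + E) Binv = tId n n₃ → tProd Binv (A + E) = tId n n₃ →
          frobNorm Binv ≤ frobNorm Ainv / (1 - specNorm Ainv * specNorm E) ∧
            specNorm Binv ≤ specNorm Ainv / (1 - specNorm Ainv * specNorm E) := by
  have hγ : 0 < 1 - specNorm Ainv * specNorm E := by linarith
  have hM1 : bcirc A * bcirc Ainv = 1 := by rw [← bcirc_tProd, hA₁, bcirc_tId]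
  have hM2 : bcirc Ainv * bcirc A = 1 := by rw [← bcirc_tProd, hA₂, bcirc_tId]
  have ht : ‖-(bcirc Ainv * bcirc E)‖ < 1 := by
    rw [norm_neg]
    exact lt_of_le_of_lt (Matrix.l2_opNorm_mul _ _) hE
  have hu1 : IsUnit (1 + bcirc Ainv * bcirc E) := by
    have := (Units.oneSub _ ht).isUnit
    simpa [sub_neg_eq_add] using this
  have huA : IsUnit (bcirc A) := ⟨⟨bcirc A, bcirc Ainv, hM1, hM2⟩, rfl⟩
  have hfact : bcirc (A + E) = bcirc A * (1 + bcirc Ainv * bcirc E) := by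
    rw [bcirc_add, mul_add, mul_one, ← Matrix.mul_assoc, hM1, one_mul]
  have hB : IsUnit (bcirc (A + E)) := hfact ▸ huA.mul hu1
  obtain ⟨C, hC⟩ := exists_right_inv hB
  obtain ⟨C', hC'⟩ := exists_left_inv hB
  have hCC : C' = C := by
    calc C' = tProd C' (tProd (A + E) C) := by rw [hC, tProd_tId]
    _ = tProd (tProd C' (A + E)) C := (tProd_assoc _ _ _).symm
    _ = C := by rw [hC', tId_tProd]
  refine ⟨⟨C, hC, hCC ▸ hC'⟩, ?_⟩
  intro Binv h1 h2
  set Z := tProd (tProd Ainv E) Binv with hZdef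
  have key : Ainv = Binv + Z := by
    have e1 : tProd Ainv (tProd (A + E) Binv) = Ainv := by rw [h1, tProd_tId]
    have e2 : tProd Ainv (tProd (A + E) Binv) = Binv + Z := by
      rw [← tProd_assoc, tProd_add_right, hA₂, tProd_add_left, tId_tProd, hZdef, tProd_assoc]
    exact e1.symm.trans e2
  have hZs : specNorm Z ≤ specNorm Ainv * specNorm E * specNorm Binv := by
    refine le_trans (specNorm_tProd_le _ _) ?_
    exact mul_le_mul_of_nonneg_right (specNorm_tProd_le Ainv E) (specNorm_nonneg Binv)
  have hZf : frobNorm Z ≤ specNorm Ainv * specNorm E * frobNorm Binv := by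
    refine le_trans (frobNorm_tProd_le _ _) ?_
    exact mul_le_mul_of_nonneg_right (specNorm_tProd_le Ainv E) (frobNorm_nonneg Binv)
  constructor
  · -- Frobenius bound
    have hf : fvec Binv = fvec Ainv - fvec Z := by
      rw [key]; ext p; simp [fvec]
    have htri : frobNorm Binv ≤ frobNorm Ainv + frobNorm Z := by
      rw [frobNorm_eq_fvec, frobNorm_eq_fvec, frobNorm_eq_fvec, hf]
      exact norm_sub_le _ _
    rw [le_div_iff₀ hγ]
    nlinarith [frobNorm_nonneg Binv, frobNorm_nonneg Z]
  · -- spectral bound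
    have hb : bcirc Binv = bcirc Ainv - bcirc Z := by
      rw [key, bcirc_add]; abel
    have htri : specNorm Binv ≤ specNorm Ainv + specNorm Z := by
      rw [specNorm, hb]
      exact norm_sub_le _ _
    rw [le_div_iff₀ hγ]
    nlinarith [specNorm_nonneg Binv, specNorm_nonneg Z]
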